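/- Let v̄^K(A) = max over subsets A' ⊆ 𝒜 with |A'| ≤ K of Σ_{i∈A'} max_{j∈A} v_{ij}, with v_{ij} ≥ 0. Then v̄^K is monotone and submodular as a function of A ⊆ S. -/

import Mathlib

/-- The capacity-constrained block value
`v̄ᴷ(T) = max_{A' ⊆ 𝒜, |A'| ≤ K} ∑_{i ∈ A'} max_{j ∈ T} v i j`
is monotone and submodular. -/
theorem capacity_constrained_value_monotone_submodular
    {S A : Type*} [Fintype S] [Fintype A] [DecidableEq S] [DecidableEq A]
    (w : A → S → NNReal) (K : ℕ)
    (vK : Finset S → NNReal)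
    (hvK : ∀ T : Finset S, vK T =
      ((Finset.univ : Finset A).powerset.filter (fun A' : Finset A => A'.card ≤ K)).sup
        (fun A' : Finset A => ∑ i ∈ A', T.sup (w i))) :
    (∀ T U : Finset S, T ⊆ U → vK T ≤ vK U) ∧
      (∀ T U : Finset S, vK (T ∪ U) + vK (T ∩ U) ≤ vK T + vK U) := by
  classical
  set F : Finset (Finset A) :=
    (Finset.univ : Finset A).powerset.filter (fun A' : Finset A => A'.card ≤ K) with hF
  have hmemF : ∀ A' : Finset A, A' ∈ F ↔ A'.card ≤ K := by
    intro A'; simp [hF]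
  have hFne : F.Nonempty := ⟨∅, (hmemF ∅).2 (by simp)⟩
  constructor
  · intro T U hTU
    rw [hvK, hvK]
    exact Finset.sup_mono_fun fun A' _ =>
      Finset.sum_le_sum fun i _ => Finset.sup_mono hTU
  · intro T U
    set a : A → NNReal := fun i => T.sup (w i) with ha
    set b : A → NNReal := fun i => U.sup (w i) with hb
    set c : A → NNReal := fun i => (T ∩ U).sup (w i) with hc
    have hca : ∀ i, c i ≤ a i := fun i => Finset.sup_mono Finset.inter_subset_left
    have hcb : ∀ i, c i ≤ b i := fun i => Finset.sup_mono Finset.inter_subset_right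
    obtain ⟨P, hPF, hPeq⟩ :=
      Finset.exists_mem_eq_sup F hFne (fun A' : Finset A => ∑ i ∈ A', (T ∪ U).sup (w i))
    obtain ⟨Q, hQF, hQeq⟩ :=
      Finset.exists_mem_eq_sup F hFne (fun A' : Finset A => ∑ i ∈ A', (T ∩ U).sup (w i))
    have hPK : P.card ≤ K := (hmemF P).1 hPF
    have hQK : Q.card ≤ K := (hmemF Q).1 hQF
    set P₁ := P.filter (fun i => b i ≤ a i) with hP₁
    set P₂ := P.filter (fun i => ¬ b i ≤ a i) with hP₂
    have hP₁P : P₁ ⊆ P := Finset.filter_subset _ _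
    have hP₂P : P₂ ⊆ P := Finset.filter_subset _ _
    set Q' := Q \ P with hQ'
    set m := min Q'.card (K - (P₁.card + (P₂ ∩ Q).card)) with hm
    obtain ⟨Qa, hQaQ', hQacard⟩ := Q'.exists_subset_card_eq (min_le_left _ _)
    have hQa1 : Qa.card ≤ K - (P₁.card + (P₂ ∩ Q).card) := by
      rw [hQacard]; exact min_le_right _ _
    have hQa2 : Qa.card ≤ Q'.card := by
      rw [hQacard]; exact min_le_left _ _
    set Qb := Q' \ Qa with hQb
    -- cardinality facts
    have hP12 : P₁.card + P₂.card = P.card :=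
      Finset.card_filter_add_card_filter_not _
    have hd12 : Disjoint P₁ P₂ := Finset.disjoint_filter_filter_not P P _
    have hd12' : Disjoint (P₁ ∩ Q) (P₂ ∩ Q) :=
      (hd12.mono Finset.inter_subset_left Finset.inter_subset_left)
    have hPQ1 : (P₁ ∩ Q).card + (P₂ ∩ Q).card ≤ (P ∩ Q).card := by
      rw [← Finset.card_union_of_disjoint hd12']
      exact Finset.card_le_card (Finset.union_subset
        (Finset.inter_subset_inter_right hP₁P) (Finset.inter_subset_inter_right hP₂P))
    have hQsplit : Q'.card + (Q ∩ P).card = Q.card := by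
      rw [hQ', Finset.card_sdiff_add_card_inter]
    have hQPcomm : (P ∩ Q).card = (Q ∩ P).card := by rw [Finset.inter_comm]
    have hQbcard : Qb.card + Qa.card = Q'.card := by
      rw [hQb, Finset.card_sdiff_add_card_eq_card hQaQ']
    have hP1Q : (P₁ ∩ Q).card ≤ P₁.card := Finset.card_le_card Finset.inter_subset_left
    have hP2Q : (P₂ ∩ Q).card ≤ P₂.card := Finset.card_le_card Finset.inter_subset_left
    -- the two selected sets
    set Sa := (P₁ ∪ P₂ ∩ Q) ∪ Qa with hSa
    set Sb := (P₂ ∪ P₁ ∩ Q) ∪ Qb with hSb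
    have hSaK : Sa.card ≤ K := by
      calc Sa.card ≤ (P₁ ∪ P₂ ∩ Q).card + Qa.card := Finset.card_union_le _ _
        _ ≤ P₁.card + (P₂ ∩ Q).card + Qa.card := by
              exact Nat.add_le_add_right (Finset.card_union_le _ _) _
        _ ≤ K := by omega
    have hSbK : Sb.card ≤ K := by
      calc Sb.card ≤ (P₂ ∪ P₁ ∩ Q).card + Qb.card := Finset.card_union_le _ _
        _ ≤ P₂.card + (P₁ ∩ Q).card + Qb.card := by
              exact Nat.add_le_add_right (Finset.card_union_le _ _) _
        _ ≤ K := by omega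
    -- disjointness for sums
    have hQ'P : Disjoint Q' P := Finset.sdiff_disjoint
    have hQaP : Disjoint Qa P := hQ'P.mono_left hQaQ'
    have hQbP : Disjoint Qb P := hQ'P.mono_left (Finset.sdiff_subset)
    have hd1 : Disjoint P₁ (P₂ ∩ Q) := hd12.mono_right Finset.inter_subset_left
    have hd2 : Disjoint (P₁ ∪ P₂ ∩ Q) Qa := by
      refine (Finset.disjoint_union_left).2 ⟨?_, ?_⟩
      · exact (hQaP.mono_right hP₁P).symm
      · exact (hQaP.mono_right (Finset.inter_subset_left.trans hP₂P)).symm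
    have hd3 : Disjoint P₂ (P₁ ∩ Q) := hd12.symm.mono_right Finset.inter_subset_left
    have hd4 : Disjoint (P₂ ∪ P₁ ∩ Q) Qb := by
      refine (Finset.disjoint_union_left).2 ⟨?_, ?_⟩
      · exact (hQbP.mono_right hP₂P).symm
      · exact (hQbP.mono_right (Finset.inter_subset_left.trans hP₁P)).symm
    have hdab : Disjoint Qa Qb := Finset.disjoint_sdiff
    -- decomposition of Q
    have hQdecomp : ((P₁ ∩ Q) ∪ (P₂ ∩ Q)) ∪ (Qa ∪ Qb) = Q := by
      have h1 : Qa ∪ Qb = Q' := by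
        rw [hQb, Finset.union_sdiff_of_subset hQaQ']
      have h2 : P₁ ∩ Q ∪ P₂ ∩ Q = P ∩ Q := by
        rw [← Finset.union_inter_distrib_right, hP₁, hP₂,
          Finset.filter_union_filter_not_eq]
      rw [h1, h2, hQ', Finset.inter_comm, Finset.union_comm]
      exact Finset.sdiff_union_inter Q P
    have hdQ : Disjoint ((P₁ ∩ Q) ∪ (P₂ ∩ Q)) (Qa ∪ Qb) := by
      refine Finset.disjoint_union_right.2 ⟨?_, ?_⟩
      · refine Finset.disjoint_union_left.2 ⟨?_, ?_⟩
        · exact (hQaP.mono_right (Finset.inter_subset_left.trans hP₁P)).symm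
        · exact (hQaP.mono_right (Finset.inter_subset_left.trans hP₂P)).symm
      · refine Finset.disjoint_union_left.2 ⟨?_, ?_⟩
        · exact (hQbP.mono_right (Finset.inter_subset_left.trans hP₁P)).symm
        · exact (hQbP.mono_right (Finset.inter_subset_left.trans hP₂P)).symm
    -- main chain
    have hPval : vK (T ∪ U) = ∑ i ∈ P₁, a i + ∑ i ∈ P₂, b i := by
      rw [hvK, hPeq]
      rw [← Finset.sum_filter_add_sum_filter_not P (fun i => b i ≤ a i)]
      congr 1
      · refine Finset.sum_congr rfl fun i hi => ?_
        have := (Finset.mem_filter.1 hi).2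
        rw [Finset.sup_union]
        exact sup_eq_left.2 this
      · refine Finset.sum_congr rfl fun i hi => ?_
        have := (Finset.mem_filter.1 hi).2
        rw [Finset.sup_union]
        exact sup_eq_right.2 (le_of_not_ge this)
    have hQval : vK (T ∩ U) ≤
        (∑ i ∈ P₁ ∩ Q, b i + ∑ i ∈ P₂ ∩ Q, a i) + (∑ i ∈ Qa, a i + ∑ i ∈ Qb, b i) := by
      rw [hvK, hQeq]
      have : ∑ i ∈ Q, (T ∩ U).sup (w i) =
          (∑ i ∈ P₁ ∩ Q, c i + ∑ i ∈ P₂ ∩ Q, c i) + (∑ i ∈ Qa, c i + ∑ i ∈ Qb, c i) := by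
        rw [← Finset.sum_union hd12', ← Finset.sum_union hdab,
          ← Finset.sum_union hdQ, hQdecomp]
      rw [this]
      gcongr
      · exact hcb _
      · exact hca _
      · exact hca _
      · exact hcb _
    calc vK (T ∪ U) + vK (T ∩ U)
        ≤ (∑ i ∈ P₁, a i + ∑ i ∈ P₂, b i) +
          ((∑ i ∈ P₁ ∩ Q, b i + ∑ i ∈ P₂ ∩ Q, a i) + (∑ i ∈ Qa, a i + ∑ i ∈ Qb, b i)) := by
          rw [hPval]; exact add_le_add_right hQval _
      _ = (∑ i ∈ Sa, a i) + (∑ i ∈ Sb, b i) := by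
          rw [hSa, hSb, Finset.sum_union hd2, Finset.sum_union hd4,
            Finset.sum_union hd1, Finset.sum_union hd3]
          ring
      _ ≤ vK T + vK U := by
          rw [hvK, hvK]
          exact add_le_add
            (Finset.le_sup (f := fun A' : Finset A => ∑ i ∈ A', T.sup (w i))
              ((hmemF Sa).2 hSaK))
            (Finset.le_sup (f := fun A' : Finset A => ∑ i ∈ A', U.sup (w i))
              ((hmemF Sb).2 hSbK))
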